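/- Let f : 𝔹ⁿ → ℂ be bounded continuous with vanishing oscillation at the boundary, i.e., Osc_z(f) := sup{|f(z)−f(w)| : β(z,w) ≤ 1} → 0 as |z| → 1, where β is the Bergman (hyperbolic) metric. If (z_γ) is a net in 𝔹ⁿ with |z_γ| → 1 and f(z_γ) → λ ∈ ℂ, then f ∘ φ_{z_γ} converges to the constant function λ uniformly on compact subsets of 𝔹ⁿ. -/

import Mathlib

open Filter MeasureTheory

noncomputable section

abbrev Cn (n : ℕ) := EuclideanSpace ℂ (Fin n)

open Classical in
/-- The Möbius involution `φ_z` of the unit ball interchanging `0` and `z`. -/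
def mobius {n : ℕ} (z w : Cn n) : Cn n :=
  if z = 0 then -w else
    (1 - (inner ℂ z w : ℂ))⁻¹ •
      (z - ((inner ℂ z w : ℂ) / (inner ℂ z z : ℂ)) • z
        - ((Real.sqrt (1 - ‖z‖ ^ 2) : ℝ) : ℂ) • (w - ((inner ℂ z w : ℂ) / (inner ℂ z z : ℂ)) • z))

/-- The inverse hyperbolic tangent. -/
def artanh (x : ℝ) : ℝ := (1 / 2) * Real.log ((1 + x) / (1 - x))

/-- The Bergman (hyperbolic) metric of the unit ball: `β(z,w) = artanh |φ_z(w)|`. -/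
def bergmanMetric {n : ℕ} (z w : Cn n) : ℝ := artanh ‖mobius z w‖

/-- The oscillation `Osc_z(f) = sup{|f(z) − f(w)| : β(z,w) ≤ 1}` (over `w ∈ 𝔹ⁿ`). -/
def Osc {n : ℕ} (f : Cn n → ℂ) (z : Cn n) : ℝ :=
  sSup {r : ℝ | ∃ w : Cn n, ‖w‖ < 1 ∧ bergmanMetric z w ≤ 1 ∧ r = ‖f z - f w‖}


open scoped InnerProductSpace

section aux
variable {E : Type*} [NormedAddCommGroup E] [InnerProductSpace ℂ E]

lemma key_inner (z a b : E) (s : ℂ) (hcs : (starRingEnd ℂ) s = s)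
    (hs : s^2 = 1 - ⟪z,z⟫_ℂ) (ht : ⟪z,z⟫_ℂ ≠ 0)
    (h2 : (1 - ⟪z,b⟫_ℂ) ≠ 0) (h1' : (1 - ⟪a,z⟫_ℂ) ≠ 0) :
    (1 - ⟪(1 - ⟪z,a⟫_ℂ)⁻¹ • (z - (⟪z,a⟫_ℂ/⟪z,z⟫_ℂ) • z - s • (a - (⟪z,a⟫_ℂ/⟪z,z⟫_ℂ) • z)),
           (1 - ⟪z,b⟫_ℂ)⁻¹ • (z - (⟪z,b⟫_ℂ/⟪z,z⟫_ℂ) • z - s • (b - (⟪z,b⟫_ℂ/⟪z,z⟫_ℂ) • z))⟫_ℂ) *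
        ((1 - ⟪a,z⟫_ℂ) * (1 - ⟪z,b⟫_ℂ)) = (1 - ⟪z,z⟫_ℂ) * (1 - ⟪a,b⟫_ℂ) := by
  have hv : ⟪(z - (⟪z,a⟫_ℂ/⟪z,z⟫_ℂ) • z - s • (a - (⟪z,a⟫_ℂ/⟪z,z⟫_ℂ) • z)),
      (z - (⟪z,b⟫_ℂ/⟪z,z⟫_ℂ) • z - s • (b - (⟪z,b⟫_ℂ/⟪z,z⟫_ℂ) • z))⟫_ℂ =
      ⟪z,z⟫_ℂ - ⟪a,z⟫_ℂ - ⟪z,b⟫_ℂ + ⟪a,z⟫_ℂ * ⟪z,b⟫_ℂ + (1 - ⟪z,z⟫_ℂ) * ⟪a,b⟫_ℂ := by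
    simp only [inner_sub_left, inner_sub_right, inner_smul_left, inner_smul_right,
      map_div₀, inner_conj_symm, hcs]
    field_simp
    ring_nf
    linear_combination (⟪z,z⟫_ℂ*⟪a,b⟫_ℂ - ⟪a,z⟫_ℂ*⟪z,b⟫_ℂ) * hs
  rw [inner_smul_left, inner_smul_right, hv, map_inv₀, map_sub, map_one, inner_conj_symm]
  field_simp
  ring

end aux

lemma one_sub_inner_ne {n : ℕ} (z a : Cn n) (hz : ‖z‖ < 1) (ha : ‖a‖ < 1) :
    (1 - ⟪z, a⟫_ℂ) ≠ 0 := by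
  have h := norm_inner_le_norm (𝕜 := ℂ) z a
  intro h0
  have : ⟪z,a⟫_ℂ = 1 := by linear_combination -h0
  rw [this] at h
  simp at h
  nlinarith [norm_nonneg z, norm_nonneg a]

lemma mobius_identity {n : ℕ} (z a b : Cn n) (hz : ‖z‖ < 1) (ha : ‖a‖ < 1) (hb : ‖b‖ < 1) :
    (1 - ⟪mobius z a, mobius z b⟫_ℂ) * ((1 - ⟪a, z⟫_ℂ) * (1 - ⟪z, b⟫_ℂ)) =
      (1 - ⟪z, z⟫_ℂ) * (1 - ⟪a, b⟫_ℂ) := by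
  by_cases hz0 : z = 0
  · subst hz0
    simp [mobius]
  · have ht : (⟪z,z⟫_ℂ) ≠ 0 := inner_self_ne_zero.mpr hz0
    have h2 : (1 - ⟪z,b⟫_ℂ) ≠ 0 := one_sub_inner_ne z b hz hb
    have h1' : (1 - ⟪a,z⟫_ℂ) ≠ 0 := one_sub_inner_ne a z ha hz
    have hs : ((Real.sqrt (1-‖z‖^2) : ℝ) : ℂ)^2 = 1 - ⟪z,z⟫_ℂ := by
      have h0 : (0:ℝ) ≤ 1 - ‖z‖^2 := by nlinarith [norm_nonneg z]
      have hzz : ⟪z,z⟫_ℂ = ((‖z‖^2 : ℝ) : ℂ) := by exact_mod_cast inner_self_eq_norm_sq_to_K z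
      rw [hzz, ← Complex.ofReal_pow, Real.sq_sqrt h0]
      push_cast; ring
    have hcs : (starRingEnd ℂ) ((Real.sqrt (1-‖z‖^2) : ℝ) : ℂ) = ((Real.sqrt (1-‖z‖^2) : ℝ) : ℂ) :=
      Complex.conj_ofReal _
    rw [show mobius z a = (1 - ⟪z,a⟫_ℂ)⁻¹ •
        (z - (⟪z,a⟫_ℂ/⟪z,z⟫_ℂ) • z - ((Real.sqrt (1-‖z‖^2) : ℝ) : ℂ) • (a - (⟪z,a⟫_ℂ/⟪z,z⟫_ℂ) • z))
      from if_neg hz0,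
      show mobius z b = (1 - ⟪z,b⟫_ℂ)⁻¹ •
        (z - (⟪z,b⟫_ℂ/⟪z,z⟫_ℂ) • z - ((Real.sqrt (1-‖z‖^2) : ℝ) : ℂ) • (b - (⟪z,b⟫_ℂ/⟪z,z⟫_ℂ) • z))
      from if_neg hz0]
    exact key_inner z a b _ hcs hs ht h2 h1'

lemma mobius_norm_sq {n : ℕ} (z a : Cn n) (hz : ‖z‖ < 1) (ha : ‖a‖ < 1) :
    (1 - ‖mobius z a‖^2) * ‖1 - ⟪z,a⟫_ℂ‖^2 = (1 - ‖z‖^2) * (1 - ‖a‖^2) := by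
  have h := mobius_identity z a a hz ha ha
  have hφ : ⟪mobius z a, mobius z a⟫_ℂ = ((‖mobius z a‖^2 : ℝ) : ℂ) := by
    exact_mod_cast inner_self_eq_norm_sq_to_K (mobius z a)
  have hzz : ⟪z,z⟫_ℂ = ((‖z‖^2 : ℝ) : ℂ) := by exact_mod_cast inner_self_eq_norm_sq_to_K z
  have haa : ⟪a,a⟫_ℂ = ((‖a‖^2 : ℝ) : ℂ) := by exact_mod_cast inner_self_eq_norm_sq_to_K a
  have hconj : (1 - ⟪a,z⟫_ℂ) * (1 - ⟪z,a⟫_ℂ) = ((‖(1 - ⟪z,a⟫_ℂ)‖^2 : ℝ) : ℂ) := by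
    rw [show (1 - ⟪a,z⟫_ℂ) = (starRingEnd ℂ) (1 - ⟪z,a⟫_ℂ) by
      rw [map_sub, map_one, inner_conj_symm]]
    rw [mul_comm, Complex.mul_conj]
    norm_cast
    simp [← Complex.sq_norm]
  rw [hφ, hzz, haa, hconj] at h
  apply Complex.ofReal_injective
  push_cast at h ⊢
  linear_combination h

lemma mobius_norm_lt {n : ℕ} (z a : Cn n) (hz : ‖z‖ < 1) (ha : ‖a‖ < 1) :
    ‖mobius z a‖ < 1 := by
  have h := mobius_norm_sq z a hz ha
  have hc : 0 < ‖1 - ⟪z,a⟫_ℂ‖ := norm_pos_iff.mpr (one_sub_inner_ne z a hz ha)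
  have h3 : (0:ℝ) < (1 - ‖z‖^2) * (1 - ‖a‖^2) :=
    mul_pos (by nlinarith [norm_nonneg z]) (by nlinarith [norm_nonneg a])
  rcases lt_or_ge ‖mobius z a‖ 1 with h4 | h4
  · exact h4
  · exfalso
    have h5 : 1 - ‖mobius z a‖^2 ≤ 0 := by nlinarith [norm_nonneg (mobius z a)]
    have h6 : (1 - ‖mobius z a‖^2) * ‖1 - ⟪z,a⟫_ℂ‖^2 ≤ 0 :=
      mul_nonpos_of_nonpos_of_nonneg h5 (sq_nonneg _)
    linarith

lemma norm_one_sub_inner_self {n : ℕ} (z : Cn n) (hz : ‖z‖ < 1) :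
    ‖1 - ⟪z,z⟫_ℂ‖ = 1 - ‖z‖^2 := by
  have hzz : ⟪z,z⟫_ℂ = ((‖z‖^2 : ℝ) : ℂ) := by exact_mod_cast inner_self_eq_norm_sq_to_K z
  rw [hzz, show (1 : ℂ) - ((‖z‖^2 : ℝ) : ℂ) = (((1 - ‖z‖^2 : ℝ)) : ℂ) by push_cast; ring,
    Complex.norm_real]
  rw [Real.norm_eq_abs, abs_of_nonneg (by nlinarith [norm_nonneg z])]

lemma mobius_invariance {n : ℕ} (z a b : Cn n) (hz : ‖z‖ < 1) (ha : ‖a‖ < 1) (hb : ‖b‖ < 1) :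
    ‖mobius (mobius z a) (mobius z b)‖ = ‖mobius a b‖ := by
  have hA : ‖mobius z a‖ < 1 := mobius_norm_lt z a hz ha
  have hB : ‖mobius z b‖ < 1 := mobius_norm_lt z b hz hb
  set A := mobius z a
  set B := mobius z b
  have e1 := mobius_norm_sq A B hA hB
  have e2 := mobius_norm_sq z a hz ha
  have e3 := mobius_norm_sq z b hz hb
  have e4 := mobius_norm_sq a b ha hb
  have hsymm : ‖1 - ⟪a,z⟫_ℂ‖ = ‖1 - ⟪z,a⟫_ℂ‖ := by
    rw [show (1 - ⟪a,z⟫_ℂ) = (starRingEnd ℂ) (1 - ⟪z,a⟫_ℂ) by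
      rw [map_sub, map_one, inner_conj_symm], RCLike.norm_conj]
  have e5 : ‖1 - ⟪A,B⟫_ℂ‖ * (‖1 - ⟪z,a⟫_ℂ‖ * ‖1 - ⟪z,b⟫_ℂ‖) =
      (1 - ‖z‖^2) * ‖1 - ⟪a,b⟫_ℂ‖ := by
    rw [← hsymm, ← norm_mul, ← norm_mul, mobius_identity z a b hz ha hb, norm_mul,
      norm_one_sub_inner_self z hz]
  have pz : (0:ℝ) < 1 - ‖z‖^2 := by nlinarith [norm_nonneg z]
  have pab : (0:ℝ) < ‖1 - ⟪a,b⟫_ℂ‖ := norm_pos_iff.mpr (one_sub_inner_ne a b ha hb)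
  have key : ‖mobius A B‖^2 = ‖mobius a b‖^2 := by
    have f2 : (1 - ‖mobius A B‖^2) * (‖1 - ⟪A,B⟫_ℂ‖ * (‖1 - ⟪z,a⟫_ℂ‖ * ‖1 - ⟪z,b⟫_ℂ‖))^2 =
        (1 - ‖mobius a b‖^2) * ((1 - ‖z‖^2) * ‖1 - ⟪a,b⟫_ℂ‖)^2 := by
      linear_combination (‖1 - ⟪z,a⟫_ℂ‖^2 * ‖1 - ⟪z,b⟫_ℂ‖^2) * e1
        + ((1 - ‖mobius z b‖^2) * ‖1 - ⟪z,b⟫_ℂ‖^2) * e2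
        + ((1 - ‖z‖^2) * (1 - ‖a‖^2)) * e3
        - (1 - ‖z‖^2)^2 * e4
    rw [e5] at f2
    have hpos : ((1 - ‖z‖^2) * ‖1 - ⟪a,b⟫_ℂ‖)^2 ≠ 0 := by positivity
    have := mul_right_cancel₀ hpos f2
    linarith
  rw [← Real.sqrt_sq (norm_nonneg (mobius A B)), ← Real.sqrt_sq (norm_nonneg (mobius a b)), key]

lemma bergman_invariance {n : ℕ} (z a b : Cn n) (hz : ‖z‖ < 1) (ha : ‖a‖ < 1) (hb : ‖b‖ < 1) :
    bergmanMetric (mobius z a) (mobius z b) = bergmanMetric a b := by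
  unfold bergmanMetric
  rw [mobius_invariance z a b hz ha hb]

lemma mobius_zero_right {n : ℕ} (z : Cn n) : mobius z 0 = z := by
  by_cases hz0 : z = 0
  · simp [mobius, hz0]
  · have ht : (⟪z,z⟫_ℂ) ≠ 0 := inner_self_ne_zero.mpr hz0
    simp [mobius, hz0, inner_zero_right]

lemma mobius_zero_left {n : ℕ} (w : Cn n) : mobius 0 w = -w := by simp [mobius]

set_option maxHeartbeats 1000000 in
lemma mobius_step {n : ℕ} (w : Cn n) (r t t' : ℝ) (hr0 : 0 ≤ r) (hr : r < 1) (hw : ‖w‖ ≤ r)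
    (h0 : 0 ≤ t) (htt' : t ≤ t') (ht1 : t' ≤ 1) :
    ‖mobius (((t : ℝ) : ℂ) • w) (((t' : ℝ) : ℂ) • w)‖ * (1 - r^2) ≤ (t' - t) * r := by
  have hw0 : (0:ℝ) ≤ ‖w‖ := norm_nonneg w
  have ht'0 : 0 ≤ t' := h0.trans htt'
  have hna : ‖((t : ℝ) : ℂ) • w‖ = t * ‖w‖ := by
    rw [norm_smul, Complex.norm_real, Real.norm_eq_abs, abs_of_nonneg h0]
  have hnb : ‖((t' : ℝ) : ℂ) • w‖ = t' * ‖w‖ := by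
    rw [norm_smul, Complex.norm_real, Real.norm_eq_abs, abs_of_nonneg ht'0]
  have ha1 : ‖((t : ℝ) : ℂ) • w‖ < 1 := by rw [hna]; nlinarith
  have hb1 : ‖((t' : ℝ) : ℂ) • w‖ < 1 := by rw [hnb]; nlinarith
  have hin : ⟪((t : ℝ) : ℂ) • w, ((t' : ℝ) : ℂ) • w⟫_ℂ = ((t * t' * ‖w‖^2 : ℝ) : ℂ) := by
    rw [inner_smul_left, inner_smul_right, Complex.conj_ofReal,
      show ⟪w,w⟫_ℂ = ((‖w‖^2 : ℝ) : ℂ) by exact_mod_cast inner_self_eq_norm_sq_to_K w]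
    push_cast; ring
  have heq := mobius_norm_sq _ _ ha1 hb1
  rw [hin, hna, hnb] at heq
  have htt1 : t * t' ≤ 1 := by nlinarith
  have hwr2 : ‖w‖^2 ≤ r^2 := by nlinarith
  have htts : t * t' * ‖w‖^2 ≤ r^2 := by
    nlinarith [mul_le_mul_of_nonneg_left hwr2 (mul_nonneg h0 ht'0),
      mul_le_mul_of_nonneg_right htt1 (sq_nonneg r)]
  have hnorm1 : ‖1 - ((t * t' * ‖w‖^2 : ℝ) : ℂ)‖ = 1 - t * t' * ‖w‖^2 := by
    rw [show (1:ℂ) - ((t * t' * ‖w‖^2 : ℝ) : ℂ) = (((1 - t * t' * ‖w‖^2 : ℝ)) : ℂ) by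
      push_cast; ring, Complex.norm_real, Real.norm_eq_abs, abs_of_nonneg (by nlinarith)]
  rw [hnorm1] at heq
  set x := ‖mobius (((t : ℝ) : ℂ) • w) (((t' : ℝ) : ℂ) • w)‖ with hxdef
  have hx0 : 0 ≤ x := norm_nonneg _
  have hx2 : x^2 * (1 - t * t' * ‖w‖^2)^2 = ‖w‖^2 * (t' - t)^2 := by linear_combination -heq
  have hr2 : (0:ℝ) < 1 - r^2 := by nlinarith
  have hmono : (1 - r^2)^2 ≤ (1 - t * t' * ‖w‖^2)^2 := by
    have h6 : 1 - r^2 ≤ 1 - t * t' * ‖w‖^2 := by linarith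
    nlinarith [h6, hr2]
  clear_value x
  have h7 : x^2 * (1 - r^2)^2 ≤ ‖w‖^2 * (t' - t)^2 := by
    calc x^2 * (1 - r^2)^2 ≤ x^2 * (1 - t * t' * ‖w‖^2)^2 :=
          mul_le_mul_of_nonneg_left hmono (sq_nonneg x)
      _ = ‖w‖^2 * (t' - t)^2 := hx2
  have h8 : ‖w‖^2 * (t' - t)^2 ≤ ((t' - t) * r)^2 := by nlinarith [sq_nonneg (t' - t)]
  have hrhs : 0 ≤ (t' - t) * r := mul_nonneg (by linarith) hr0
  have hA : x * (1 - r^2) = Real.sqrt ((x * (1 - r^2))^2) :=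
    (Real.sqrt_sq (mul_nonneg hx0 hr2.le)).symm
  have hB : (t' - t) * r = Real.sqrt (((t' - t) * r)^2) := (Real.sqrt_sq hrhs).symm
  rw [hA, hB]
  apply Real.sqrt_le_sqrt
  nlinarith [h7, h8]

lemma mobius_boundary {n : ℕ} (z a : Cn n) (r : ℝ) (hz : ‖z‖ < 1) (hr0 : 0 ≤ r) (hr : r < 1)
    (ha : ‖a‖ ≤ r) : (1 - ‖mobius z a‖^2) * (1 - r)^2 ≤ 1 - ‖z‖^2 := by
  have ha1 : ‖a‖ < 1 := lt_of_le_of_lt ha hr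
  have heq := mobius_norm_sq z a hz ha1
  have hin : ‖⟪z,a⟫_ℂ‖ ≤ r := by
    refine le_trans (norm_inner_le_norm z a) ?_
    nlinarith [norm_nonneg z, norm_nonneg a]
  have hlow : 1 - r ≤ ‖1 - ⟪z,a⟫_ℂ‖ := by
    have h := norm_sub_norm_le (1:ℂ) (⟪z,a⟫_ℂ)
    have h1 : ‖(1:ℂ)‖ = 1 := norm_one
    linarith [h, hin]
  have hphi : 0 ≤ 1 - ‖mobius z a‖^2 := by
    nlinarith [mobius_norm_lt z a hz ha1, norm_nonneg (mobius z a)]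
  have step1 : (1 - ‖mobius z a‖^2) * (1 - r)^2 ≤ (1 - ‖mobius z a‖^2) * ‖1 - ⟪z,a⟫_ℂ‖^2 := by
    apply mul_le_mul_of_nonneg_left _ hphi
    nlinarith [norm_nonneg (1 - ⟪z,a⟫_ℂ)]
  have step2 : (1 - ‖z‖^2) * (1 - ‖a‖^2) ≤ 1 - ‖z‖^2 := by
    have hz2 : (0:ℝ) ≤ 1 - ‖z‖^2 := by nlinarith [norm_nonneg z]
    nlinarith [mul_nonneg hz2 (sq_nonneg ‖a‖)]
  linarith [step1, heq.le, step2]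

lemma artanh_le_one (x : ℝ) (h0 : 0 ≤ x) (h : x ≤ 1/2) : artanh x ≤ 1 := by
  unfold artanh
  have hx1 : (0:ℝ) < 1 - x := by linarith
  have hy : (0:ℝ) < (1+x)/(1-x) := by positivity
  have hle : (1+x)/(1-x) ≤ 3 := by rw [div_le_iff₀ hx1]; linarith
  have hlog := Real.log_le_sub_one_of_pos hy
  nlinarith [hlog, hle]

lemma dist_le_Osc {n : ℕ} (f : Cn n → ℂ) (M : ℝ) (hM : ∀ w : Cn n, ‖w‖ < 1 → ‖f w‖ ≤ M)
    (u u' : Cn n) (hu : ‖u‖ < 1) (hu' : ‖u'‖ < 1) (hb : bergmanMetric u u' ≤ 1) :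
    dist (f u) (f u') ≤ Osc f u := by
  apply le_csSup
  · refine ⟨2*M, ?_⟩
    rintro x ⟨v, hv1, -, rfl⟩
    have h1 := hM u hu
    have h2 := hM v hv1
    calc ‖f u - f v‖ ≤ ‖f u‖ + ‖f v‖ := norm_sub_le _ _
      _ ≤ 2*M := by linarith
  · exact ⟨u', hu', hb, dist_eq_norm _ _⟩
set_option maxHeartbeats 1000000 in
/-- Key step in Proposition 7.1: if `f` is bounded continuous on `𝔹ⁿ` with
vanishing oscillation at the boundary and `(z γ)` is a net in `𝔹ⁿ` with
`|z γ| → 1` and `f(z γ) → λ`, then `f ∘ φ_{z γ} → λ` uniformly on compact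
subsets of `𝔹ⁿ`. -/
theorem stmt19 {n : ℕ} {ι : Type*} (f : Cn n → ℂ)
    (hf_cont : ContinuousOn f (Metric.ball (0 : Cn n) 1))
    (hf_bdd : ∃ M : ℝ, ∀ w : Cn n, ‖w‖ < 1 → ‖f w‖ ≤ M)
    (hVO : ∀ ε > (0 : ℝ), ∃ δ : ℝ, δ < 1 ∧
      ∀ z : Cn n, ‖z‖ < 1 → δ < ‖z‖ → Osc f z < ε)
    (l : Filter ι) [l.NeBot] (z : ι → Cn n) (hzb : ∀ γ, ‖z γ‖ < 1)
    (hz1 : Tendsto (fun γ => ‖z γ‖) l (nhds 1))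
    (lam : ℂ) (hlam : Tendsto (fun γ => f (z γ)) l (nhds lam)) :
    ∀ K ⊆ Metric.ball (0 : Cn n) 1, IsCompact K →
      TendstoUniformlyOn (fun γ w => f (mobius (z γ) w)) (fun _ => lam) l K := by
  intro K hK hKc
  rw [Metric.tendstoUniformlyOn_iff]
  intro ε hε
  obtain ⟨M, hM⟩ := hf_bdd
  rcases K.eq_empty_or_nonempty with hKe | hKne
  · filter_upwards [] with γ
    intro w hw
    rw [hKe] at hw
    exact absurd hw (Set.notMem_empty w)
  · obtain ⟨x0, hx0K, hx0max⟩ := hKc.exists_isMaxOn hKne (continuous_norm.continuousOn)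
    set r := ‖x0‖ with hrdef
    have hr0 : 0 ≤ r := norm_nonneg x0
    have hr1 : r < 1 := by
      have := hK hx0K
      simpa [mem_ball_zero_iff] using this
    have hrK : ∀ w ∈ K, ‖w‖ ≤ r := fun w hw => hx0max hw
    have hr2 : (0:ℝ) < 1 - r^2 := by nlinarith
    obtain ⟨m0, hm0⟩ := exists_nat_ge (2*r/(1-r^2))
    set m := m0 + 1 with hmdef
    have hmR : (0:ℝ) < (m:ℝ) := by exact_mod_cast Nat.succ_pos m0
    have hstep : r / (m:ℝ) ≤ (1 - r^2)/2 := by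
      rw [div_le_div_iff₀ hmR two_pos]
      have h5 : 2*r/(1-r^2) ≤ (m:ℝ) := le_trans hm0 (by exact_mod_cast Nat.le_succ m0)
      rw [div_le_iff₀ hr2] at h5
      linarith
    set ε' := ε / (2*((m:ℝ)+1)) with hε'def
    have hε'pos : 0 < ε' := by positivity
    obtain ⟨δ, hδ1, hδ⟩ := hVO ε' hε'pos
    set δ₀ := max δ 0 with hδ₀def
    have hδ₀0 : 0 ≤ δ₀ := le_max_right _ _
    have hδ₀1 : δ₀ < 1 := max_lt hδ1 one_pos
    set η := (1 - δ₀^2) * (1 - r)^2 with hηdef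
    have hη : 0 < η := mul_pos (by nlinarith) (by nlinarith)
    have hc0 : max (1 - η/2) 0 < 1 := max_lt (by linarith) one_pos
    have hev1 : ∀ᶠ γ in l, max (1 - η/2) 0 < ‖z γ‖ := hz1.eventually (eventually_gt_nhds hc0)
    have hev2 : ∀ᶠ γ in l, dist (f (z γ)) lam < ε/2 :=
      Metric.tendsto_nhds.mp hlam (ε/2) (by linarith)
    filter_upwards [hev1, hev2] with γ h1 h2
    intro w hw
    have hZ1 : ‖z γ‖ < 1 := hzb γ
    have hwr : ‖w‖ ≤ r := hrK w hw
    have hw1 : ‖w‖ < 1 := lt_of_le_of_lt hwr hr1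
    have hak : ∀ k : ℕ, k ≤ m → ‖((((k:ℝ)/(m:ℝ)) : ℝ) : ℂ) • w‖ ≤ r := by
      intro k hk
      rw [norm_smul, Complex.norm_real, Real.norm_eq_abs, abs_of_nonneg (by positivity)]
      have hk1 : (k:ℝ)/(m:ℝ) ≤ 1 := by
        rw [div_le_one hmR]; exact_mod_cast hk
      have hk0 : 0 ≤ (k:ℝ)/(m:ℝ) := by positivity
      nlinarith [norm_nonneg w]
    have huk1 : ∀ k : ℕ, k ≤ m → ‖mobius (z γ) (((((k:ℝ)/(m:ℝ)) : ℝ) : ℂ) • w)‖ < 1 := fun k hk =>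
      mobius_norm_lt _ _ hZ1 (lt_of_le_of_lt (hak k hk) hr1)
    have hukδ : ∀ k : ℕ, k ≤ m → δ < ‖mobius (z γ) (((((k:ℝ)/(m:ℝ)) : ℝ) : ℂ) • w)‖ := by
      intro k hk
      have hb := mobius_boundary (z γ) _ r hZ1 hr0 hr1 (hak k hk)
      have h1' : 1 - η/2 < ‖z γ‖ := lt_of_le_of_lt (le_max_left _ _) h1
      have hZ0 : 0 ≤ ‖z γ‖ := norm_nonneg (z γ)
      have hsmall : 1 - ‖z γ‖^2 < η := by nlinarith
      set u : ℝ := ‖mobius (z γ) (((((k:ℝ)/(m:ℝ)) : ℝ) : ℂ) • w)‖ with hudef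
      have hu0 : 0 ≤ u := norm_nonneg _
      clear_value u
      have hP : (0:ℝ) < (1 - r)^2 := pow_pos (by linarith) 2
      rw [hηdef] at hsmall
      have hq : (1-u^2)*(1-r)^2 < (1-δ₀^2)*(1-r)^2 := by linarith
      have h9 := (mul_lt_mul_iff_of_pos_right hP).mp hq
      have hV : δ₀^2 < u^2 := by linarith
      have hfin : δ₀ < u := by nlinarith [hV, hδ₀0, hu0]
      exact lt_of_le_of_lt (le_max_left δ 0) hfin
    have hberg : ∀ k : ℕ, k < m →
        bergmanMetric (mobius (z γ) (((((k:ℝ)/(m:ℝ)) : ℝ) : ℂ) • w))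
          (mobius (z γ) ((((((k+1:ℕ):ℝ)/(m:ℝ)) : ℝ) : ℂ) • w)) ≤ 1 := by
      intro k hk
      have hk1 : (k+1:ℕ) ≤ m := hk
      rw [bergman_invariance (z γ) _ _ hZ1 (lt_of_le_of_lt (hak k hk.le) hr1)
        (lt_of_le_of_lt (hak (k+1) hk1) hr1)]
      unfold bergmanMetric
      apply artanh_le_one _ (norm_nonneg _)
      have hst := mobius_step w r ((k:ℝ)/(m:ℝ)) (((k+1:ℕ):ℝ)/(m:ℝ)) hr0 hr1 hwr
        (by positivity) (by push_cast; gcongr; linarith) (by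
          rw [div_le_one hmR]; exact_mod_cast hk1)
      have hdiff : ((k+1:ℕ):ℝ)/(m:ℝ) - (k:ℝ)/(m:ℝ) = 1/(m:ℝ) := by
        push_cast; field_simp; ring
      rw [hdiff] at hst
      have : 1/(m:ℝ) * r = r/(m:ℝ) := by ring
      rw [this] at hst
      nlinarith [hst, hstep, hr2]
    have hosc : ∀ k : ℕ, k < m →
        dist (f (mobius (z γ) (((((k:ℝ)/(m:ℝ)) : ℝ) : ℂ) • w)))
             (f (mobius (z γ) ((((((k+1:ℕ):ℝ)/(m:ℝ)) : ℝ) : ℂ) • w))) < ε' := by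
      intro k hk
      have h3 := dist_le_Osc f M hM _ _ (huk1 k hk.le) (huk1 (k+1) hk) (hberg k hk)
      have h4 := hδ _ (huk1 k hk.le) (hukδ k hk.le)
      linarith
    have key : dist (f (z γ)) (f (mobius (z γ) w)) ≤
        ∑ i ∈ Finset.range m, dist (f (mobius (z γ) (((((i:ℝ)/(m:ℝ)) : ℝ) : ℂ) • w)))
          (f (mobius (z γ) ((((((i+1:ℕ):ℝ)/(m:ℝ)) : ℝ) : ℂ) • w))) := by
      have htel := dist_le_range_sum_dist
        (fun k : ℕ => f (mobius (z γ) (((((k:ℝ)/(m:ℝ)) : ℝ) : ℂ) • w))) m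
      simp only [Nat.cast_zero, zero_div, Complex.ofReal_zero, zero_smul, mobius_zero_right,
        div_self (ne_of_gt hmR), Complex.ofReal_one, one_smul] at htel
      exact htel
    have hsum : (∑ i ∈ Finset.range m, dist (f (mobius (z γ) (((((i:ℝ)/(m:ℝ)) : ℝ) : ℂ) • w)))
          (f (mobius (z γ) ((((((i+1:ℕ):ℝ)/(m:ℝ)) : ℝ) : ℂ) • w)))) ≤ (m:ℝ) * ε' := by
      calc (∑ i ∈ Finset.range m, dist (f (mobius (z γ) (((((i:ℝ)/(m:ℝ)) : ℝ) : ℂ) • w)))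
          (f (mobius (z γ) ((((((i+1:ℕ):ℝ)/(m:ℝ)) : ℝ) : ℂ) • w))))
          ≤ ∑ _i ∈ Finset.range m, ε' :=
            Finset.sum_le_sum (fun i hi => (hosc i (Finset.mem_range.mp hi)).le)
        _ = (m:ℝ) * ε' := by rw [Finset.sum_const, Finset.card_range, nsmul_eq_mul]
    have hmε : (m:ℝ) * ε' < ε/2 := by
      have hq2 : (m:ℝ)/(2*((m:ℝ)+1)) < 1/2 := by
        rw [div_lt_div_iff₀ (by positivity) two_pos]; linarith
      calc (m:ℝ)*ε' = ε * ((m:ℝ)/(2*((m:ℝ)+1))) := by rw [hε'def]; ring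
        _ < ε * (1/2) := mul_lt_mul_of_pos_left hq2 hε
        _ = ε/2 := by ring
    show dist lam (f (mobius (z γ) w)) < ε
    calc dist lam (f (mobius (z γ) w))
        ≤ dist lam (f (z γ)) + dist (f (z γ)) (f (mobius (z γ) w)) := dist_triangle _ _ _
      _ < ε := by
          rw [dist_comm lam (f (z γ))]
          linarith [key, hsum, hmε, h2]

end
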